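/- Let N ≥ 1 and let (μ_i)_{i≥0} be a real sequence. For s ∈ {0,1,2} define τ_0^{(s)} := 1 and τ_i^{(s)} := det(μ_{j+k+s})_{j,k=0}^{i−1}, and assume τ_i^{(s)} ≠ 0 for all 1 ≤ i ≤ N+1 and s ∈ {0,1,2}. For s ∈ {0,1} set Q_i^{(s)} := τ_{i−1}^{(s)} τ_i^{(s+1)} / (τ_i^{(s)} τ_{i−1}^{(s+1)}) and E_i^{(s)} := τ_{i+1}^{(s)} τ_{i−1}^{(s+1)} / (τ_i^{(s)} τ_i^{(s+1)}), with E_0^{(s)} := 0. Then the discrete Toda identities hold: Q_i^{(1)} + E_{i−1}^{(1)} = Q_i^{(0)} + E_i^{(0)} for i = 1,…,N, and Q_i^{(1)} E_i^{(1)} = Q_{i+1}^{(0)} E_i^{(0)} for i = 1,…,N−1. -/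

import Mathlib

open Finset

/-- Hankel determinant τ_i^{(s)} of the shifted moment sequence (μ_{m+s}). -/
noncomputable def tauS (μ : ℕ → ℝ) (s i : ℕ) : ℝ :=
  Matrix.det (Matrix.of fun j k : Fin i => μ (j.1 + k.1 + s))

/-- Q_i^{(s)} := τ_{i−1}^{(s)} τ_i^{(s+1)} / (τ_i^{(s)} τ_{i−1}^{(s+1)}). -/
noncomputable def Qd (μ : ℕ → ℝ) (s i : ℕ) : ℝ :=
  tauS μ s (i - 1) * tauS μ (s + 1) i / (tauS μ s i * tauS μ (s + 1) (i - 1))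

/-- E_i^{(s)} := τ_{i+1}^{(s)} τ_{i−1}^{(s+1)} / (τ_i^{(s)} τ_i^{(s+1)}), with E_0^{(s)} = 0. -/
noncomputable def Ed (μ : ℕ → ℝ) (s i : ℕ) : ℝ :=
  if i = 0 then 0 else
    tauS μ s (i + 1) * tauS μ (s + 1) (i - 1) / (tauS μ s i * tauS μ (s + 1) i)

/-- Reindexing of `Fin (n+2)` putting positions `0` and `last` first. -/
noncomputable def eqv (n : ℕ) : Fin 2 ⊕ Fin n ≃ Fin (n + 2) :=
  Equiv.ofBijective
    (Sum.elim (fun i : Fin 2 => if i = 0 then (0 : Fin (n + 2)) else Fin.last (n + 1))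
      (fun j : Fin n => j.succ.castSucc))
    (by
      rw [Fintype.bijective_iff_injective_and_card]
      refine ⟨?_, by simp [Nat.add_comm]⟩
      rintro (a | a) (b | b) h <;> simp only [Sum.elim_inl, Sum.elim_inr] at h
      · rcases Fin.exists_fin_two.mp ⟨a, rfl⟩ with rfl | rfl <;>
        rcases Fin.exists_fin_two.mp ⟨b, rfl⟩ with rfl | rfl <;>
          simp_all [Fin.ext_iff]
      · exfalso
        split_ifs at h <;>
        · have := congrArg Fin.val h
          simp [Fin.ext_iff] at this <;> omega
      · exfalso
        split_ifs at h <;>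
        · have := congrArg Fin.val h
          simp [Fin.ext_iff] at this <;> omega
      · have := congrArg Fin.val h
        simp [Fin.ext_iff] at this ⊢
        omega)

lemma eqv_inl0 (n : ℕ) : eqv n (Sum.inl 0) = 0 := rfl
lemma eqv_inl1 (n : ℕ) : eqv n (Sum.inl 1) = Fin.last (n + 1) := rfl
lemma eqv_inr (n : ℕ) (j : Fin n) : eqv n (Sum.inr j) = j.succ.castSucc := rfl

/-- Desnanot–Jacobi identity for matrices with nonzero determinant. -/
lemma desnanot_jacobi {n : ℕ} (A : Matrix (Fin (n + 2)) (Fin (n + 2)) ℝ)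
    (hA : A.det ≠ 0) :
    A.det * (A.submatrix (fun j : Fin n => j.succ.castSucc)
        (fun j : Fin n => j.succ.castSucc)).det =
      (A.submatrix Fin.succ Fin.succ).det * (A.submatrix Fin.castSucc Fin.castSucc).det -
        (A.submatrix Fin.castSucc Fin.succ).det * (A.submatrix Fin.succ Fin.castSucc).det := by
  classical
  set u : Fin (n + 2) → ℝ := fun i => A.adjugate i 0 with hu
  set v : Fin (n + 2) → ℝ := fun i => A.adjugate i (Fin.last (n + 1)) with hv
  set B : Matrix (Fin (n + 2)) (Fin (n + 2)) ℝ :=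
    Matrix.of (fun i j => if j = 0 then u i else if j = Fin.last (n + 1) then v i
      else if i = j then 1 else 0) with hB
  -- the product A * B
  have hABcol0 : ∀ i, (A * B) i 0 = A.det * (if i = 0 then 1 else 0) := by
    intro i
    have : (A * B) i 0 = (A * A.adjugate) i 0 := by
      simp [Matrix.mul_apply, hB, hu]
    rw [this, Matrix.mul_adjugate]
    simp [Matrix.one_apply]
  have hABcollast : ∀ i, (A * B) i (Fin.last (n + 1)) =
      A.det * (if i = Fin.last (n + 1) then 1 else 0) := by
    intro i
    have h0 : (Fin.last (n+1)) ≠ (0 : Fin (n+2)) := by simp [Fin.ext_iff]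
    have : (A * B) i (Fin.last (n + 1)) = (A * A.adjugate) i (Fin.last (n + 1)) := by
      simp [Matrix.mul_apply, hB, hv, h0]
    rw [this, Matrix.mul_adjugate]
    simp [Matrix.one_apply]
  have hABmid : ∀ i (j : Fin (n + 2)), j ≠ 0 → j ≠ Fin.last (n + 1) → (A * B) i j = A i j := by
    intro i j hj0 hjl
    simp only [Matrix.mul_apply, hB, Matrix.of_apply, hj0, hjl, if_neg, if_false]
    rw [Finset.sum_eq_single j] <;> simp +contextual [hj0, hjl, eq_comm]
  -- block forms
  have hABblock : (A * B).submatrix (eqv n) (eqv n) =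
      Matrix.fromBlocks (Matrix.diagonal (fun _ : Fin 2 => A.det))
        (Matrix.of fun (i : Fin 2) (k : Fin n) => A (eqv n (Sum.inl i)) k.succ.castSucc)
        0
        (A.submatrix (fun j : Fin n => j.succ.castSucc) (fun j : Fin n => j.succ.castSucc)) := by
    ext (i | i) (k | k)
    · rcases Fin.exists_fin_two.mp ⟨i, rfl⟩ with rfl | rfl <;>
      rcases Fin.exists_fin_two.mp ⟨k, rfl⟩ with rfl | rfl <;>
        simp [Matrix.submatrix_apply, eqv_inl0, eqv_inl1, hABcol0, hABcollast,
          Matrix.diagonal, Fin.ext_iff]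
    · have h0 : (k.succ.castSucc : Fin (n+2)) ≠ 0 := by simp [Fin.ext_iff]
      have hl : (k.succ.castSucc : Fin (n+2)) ≠ Fin.last (n+1) := by
        simp [Fin.ext_iff]; omega
      rcases Fin.exists_fin_two.mp ⟨i, rfl⟩ with rfl | rfl <;>
        simp [Matrix.submatrix_apply, eqv_inl0, eqv_inl1, eqv_inr, hABmid _ _ h0 hl, -Fin.castSucc_succ]
    · rcases Fin.exists_fin_two.mp ⟨k, rfl⟩ with rfl | rfl <;>
        simp [Matrix.submatrix_apply, eqv_inl0, eqv_inl1, eqv_inr, hABcol0, hABcollast,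
          Fin.ext_iff] <;> omega
    · have h0 : (k.succ.castSucc : Fin (n+2)) ≠ 0 := by simp [Fin.ext_iff]
      have hl : (k.succ.castSucc : Fin (n+2)) ≠ Fin.last (n+1) := by
        simp [Fin.ext_iff]; omega
      simp [Matrix.submatrix_apply, eqv_inr, hABmid _ _ h0 hl, -Fin.castSucc_succ]
  have hBblock : B.submatrix (eqv n) (eqv n) =
      Matrix.fromBlocks !![u 0, v 0; u (Fin.last (n+1)), v (Fin.last (n+1))]
        0
        (Matrix.of fun (k : Fin n) (i : Fin 2) =>
          if i = 0 then u k.succ.castSucc else v k.succ.castSucc)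
        1 := by
    ext (i | i) (k | k)
    · rcases Fin.exists_fin_two.mp ⟨i, rfl⟩ with rfl | rfl <;>
      rcases Fin.exists_fin_two.mp ⟨k, rfl⟩ with rfl | rfl <;>
        simp [Matrix.submatrix_apply, eqv_inl0, eqv_inl1, hB, -Fin.castSucc_succ]
    · have h0 : (k.succ.castSucc : Fin (n+2)) ≠ 0 := by simp [Fin.ext_iff]
      have hl : (k.succ.castSucc : Fin (n+2)) ≠ Fin.last (n+1) := by
        simp [Fin.ext_iff]; omega
      rcases Fin.exists_fin_two.mp ⟨i, rfl⟩ with rfl | rfl <;>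
        simp [Matrix.submatrix_apply, eqv_inl0, eqv_inl1, eqv_inr, hB, h0, hl,
          Ne.symm h0, Ne.symm hl, -Fin.castSucc_succ]
    · rcases Fin.exists_fin_two.mp ⟨k, rfl⟩ with rfl | rfl <;>
        simp [Matrix.submatrix_apply, eqv_inl0, eqv_inl1, eqv_inr, hB]
    · have h0 : (k.succ.castSucc : Fin (n+2)) ≠ 0 := by simp [Fin.ext_iff]
      have hl : (k.succ.castSucc : Fin (n+2)) ≠ Fin.last (n+1) := by
        simp [Fin.ext_iff]; omega
      simp [Matrix.submatrix_apply, eqv_inr, hB, h0, hl, Matrix.one_apply, -Fin.castSucc_succ]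
  have hdetAB : (A * B).det = A.det ^ 2 *
      (A.submatrix (fun j : Fin n => j.succ.castSucc) (fun j : Fin n => j.succ.castSucc)).det := by
    rw [← Matrix.det_submatrix_equiv_self (eqv n), hABblock, Matrix.det_fromBlocks_zero₂₁]
    simp [sq]
  have hdetB : B.det = u 0 * v (Fin.last (n+1)) - v 0 * u (Fin.last (n+1)) := by
    rw [← Matrix.det_submatrix_equiv_self (eqv n), hBblock, Matrix.det_fromBlocks_zero₁₂]
    simp [Matrix.det_fin_two_of]
  have key : A.det * ((A.submatrix (fun j : Fin n => j.succ.castSucc)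
      (fun j : Fin n => j.succ.castSucc)).det) =
      u 0 * v (Fin.last (n+1)) - v 0 * u (Fin.last (n+1)) := by
    have := hdetAB
    rw [Matrix.det_mul, hdetB] at this
    have h2 : A.det * (A.det * ((A.submatrix (fun j : Fin n => j.succ.castSucc)
        (fun j : Fin n => j.succ.castSucc)).det)) =
        A.det * (u 0 * v (Fin.last (n+1)) - v 0 * u (Fin.last (n+1))) := by
      linear_combination -this
    exact mul_left_cancel₀ hA h2
  rw [key]
  -- express adjugate entries as signed minors
  have e1 : u 0 = (A.submatrix Fin.succ Fin.succ).det := by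
    rw [hu]
    show A.adjugate 0 0 = _
    rw [Matrix.adjugate_fin_succ_eq_det_submatrix]
    simp [Fin.succAbove_zero]
  have e2 : v (Fin.last (n+1)) = (A.submatrix Fin.castSucc Fin.castSucc).det := by
    rw [hv]
    show A.adjugate (Fin.last (n+1)) (Fin.last (n+1)) = _
    rw [Matrix.adjugate_fin_succ_eq_det_submatrix]
    simp [Fin.succAbove_last]
  have e3 : v 0 = (-1 : ℝ) ^ (n + 1) * (A.submatrix Fin.castSucc Fin.succ).det := by
    rw [hv]
    show A.adjugate 0 (Fin.last (n+1)) = _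
    rw [Matrix.adjugate_fin_succ_eq_det_submatrix]
    simp [Fin.succAbove_last, Fin.succAbove_zero, Fin.val_last]
  have e4 : u (Fin.last (n+1)) = (-1 : ℝ) ^ (n + 1) * (A.submatrix Fin.succ Fin.castSucc).det := by
    rw [hu]
    show A.adjugate (Fin.last (n+1)) 0 = _
    rw [Matrix.adjugate_fin_succ_eq_det_submatrix]
    simp [Fin.succAbove_last, Fin.succAbove_zero, Fin.val_last]
  rw [e1, e2, e3, e4]
  have hsq : ((-1 : ℝ) ^ (n + 1)) * ((-1 : ℝ) ^ (n + 1)) = 1 := by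
    rw [← pow_add]
    exact Even.neg_one_pow ⟨n + 1, by ring⟩
  linear_combination
    (-(A.submatrix Fin.castSucc Fin.succ).det * (A.submatrix Fin.succ Fin.castSucc).det) * hsq

lemma tauS_zero (μ : ℕ → ℝ) (s : ℕ) : tauS μ s 0 = 1 := by
  simp [tauS]

open Matrix in
lemma hankelDJ (μ : ℕ → ℝ) (s m : ℕ) (h : tauS μ s (m + 2) ≠ 0) :
    tauS μ s (m + 2) * tauS μ (s + 2) m =
      tauS μ s (m + 1) * tauS μ (s + 2) (m + 1) - tauS μ (s + 1) (m + 1) ^ 2 := by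
  set A : Matrix (Fin (m + 2)) (Fin (m + 2)) ℝ :=
    Matrix.of fun j k : Fin (m + 2) => μ (j.1 + k.1 + s) with hA
  have hdj := desnanot_jacobi A h
  have einner : (A.submatrix (fun j : Fin m => j.succ.castSucc)
      (fun j : Fin m => j.succ.castSucc)) = Matrix.of fun j k : Fin m => μ (j.1 + k.1 + (s + 2)) := by
    ext j k
    simp only [Matrix.submatrix_apply, hA, Matrix.of_apply, Fin.coe_castSucc, Fin.val_succ]
    congr 1; omega
  have ess : A.submatrix Fin.succ Fin.succ = Matrix.of fun j k : Fin (m+1) => μ (j.1 + k.1 + (s + 2)) := by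
    ext j k
    simp only [Matrix.submatrix_apply, hA, Matrix.of_apply, Fin.val_succ]
    congr 1; omega
  have ecc : A.submatrix Fin.castSucc Fin.castSucc =
      Matrix.of fun j k : Fin (m+1) => μ (j.1 + k.1 + s) := by
    ext j k
    simp only [Matrix.submatrix_apply, hA, Matrix.of_apply, Fin.coe_castSucc]
  have ecs : A.submatrix Fin.castSucc Fin.succ =
      Matrix.of fun j k : Fin (m+1) => μ (j.1 + k.1 + (s + 1)) := by
    ext j k
    simp only [Matrix.submatrix_apply, hA, Matrix.of_apply, Fin.coe_castSucc, Fin.val_succ]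
    congr 1; omega
  have esc : A.submatrix Fin.succ Fin.castSucc =
      Matrix.of fun j k : Fin (m+1) => μ (j.1 + k.1 + (s + 1)) := by
    ext j k
    simp only [Matrix.submatrix_apply, hA, Matrix.of_apply, Fin.coe_castSucc, Fin.val_succ]
    congr 1; omega
  rw [einner, ess, ecc, ecs, esc] at hdj
  unfold tauS
  linear_combination hdj

theorem stmt6 (N : ℕ) (hN : 1 ≤ N) (μ : ℕ → ℝ)
    (hτ : ∀ s, s ≤ 2 → ∀ i, 1 ≤ i → i ≤ N + 1 → tauS μ s i ≠ 0) :
    (∀ i, 1 ≤ i → i ≤ N → Qd μ 1 i + Ed μ 1 (i - 1) = Qd μ 0 i + Ed μ 0 i) ∧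
    (∀ i, 1 ≤ i → i ≤ N - 1 → Qd μ 1 i * Ed μ 1 i = Qd μ 0 (i + 1) * Ed μ 0 i) := by
  have key : ∀ s i, s ≤ 2 → i ≤ N + 1 → tauS μ s i ≠ 0 := by
    intro s i hs hi
    rcases Nat.eq_zero_or_pos i with rfl | hpos
    · rw [tauS_zero]; norm_num
    · exact hτ s hs i hpos hi
  constructor
  · intro i hi1 hiN
    rcases Nat.lt_or_ge i 2 with h2i | h2i
    · obtain rfl : i = 1 := by omega
      have hdj := hankelDJ μ 0 0 (key 0 2 (by norm_num) (by omega))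
      norm_num [tauS_zero] at hdj
      simp only [Qd, Ed]
      norm_num [tauS_zero]
      have h10 := key 1 1 (by norm_num) (by omega)
      have h00 := key 0 1 (by norm_num) (by omega)
      have h20 := key 2 1 (by norm_num) (by omega)
      field_simp
      linear_combination (-1) * hdj
    · obtain ⟨k, rfl⟩ : ∃ k, i = k + 2 := ⟨i - 2, by omega⟩
      have h1 : tauS μ 0 (k + 2) * tauS μ 2 k
          = tauS μ 0 (k + 1) * tauS μ 2 (k + 1) - tauS μ 1 (k + 1) ^ 2 :=
        hankelDJ μ 0 k (key 0 (k + 2) (by norm_num) (by omega))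
      have h2 : tauS μ 0 (k + 3) * tauS μ 2 (k + 1)
          = tauS μ 0 (k + 2) * tauS μ 2 (k + 2) - tauS μ 1 (k + 2) ^ 2 :=
        hankelDJ μ 0 (k + 1) (key 0 (k + 3) (by norm_num) (by omega))
      have d1 : tauS μ 1 (k + 2) ≠ 0 := key 1 (k + 2) (by norm_num) (by omega)
      have d2 : tauS μ 2 (k + 1) ≠ 0 := key 2 (k + 1) (by norm_num) (by omega)
      have d3 : tauS μ 1 (k + 1) ≠ 0 := key 1 (k + 1) (by norm_num) (by omega)
      have d4 : tauS μ 0 (k + 2) ≠ 0 := key 0 (k + 2) (by norm_num) (by omega)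
      simp only [Qd, Ed, Nat.add_sub_cancel, tauS_zero,
        show k + 1 + 1 = k + 2 from rfl, show k + 2 + 1 = k + 3 from rfl]
      norm_num
      field_simp
      linear_combination
        (tauS μ 1 (k+2)^2) * h1
        - (tauS μ 1 (k+1)^2) * h2
  · intro i hi1 hiN
    obtain ⟨m, rfl⟩ : ∃ m, i = m + 1 := ⟨i - 1, by omega⟩
    have d1 : tauS μ 1 (m + 1) ≠ 0 := key 1 (m + 1) (by norm_num) (by omega)
    have d2 : tauS μ 2 m ≠ 0 := key 2 m (by norm_num) (by omega)
    have d3 : tauS μ 2 (m + 1) ≠ 0 := key 2 (m + 1) (by norm_num) (by omega)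
    have d4 : tauS μ 0 (m + 2) ≠ 0 := key 0 (m + 2) (by norm_num) (by omega)
    have d5 : tauS μ 0 (m + 1) ≠ 0 := key 0 (m + 1) (by norm_num) (by omega)
    simp only [Qd, Ed, Nat.add_sub_cancel, tauS_zero]
    norm_num
    field_simp
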